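/- arXiv:2403.10045 — 2 statements merged into one kernel-verified Lean document; each statement's English description precedes it below -/
import Mathlib

section
/- Combining: let g : ℝⁿ → ℝ be convex (the adversarial loss ℓ̃_ρ^adv), let h : ℝⁿ → ℝᵐ be linear and injective, let L = g ∘ h⁻¹ (defined on the range of h) be L-Lipschitz, let μ be a probability measure on ℝⁿ with mean m, and let x' satisfy ‖h(x') - ∫ h(x) dμ(x)‖ ≤ σ. Then g(x') ≤ ∫ g(x) dμ(x) + L·σ. -/
open MeasureTheory

/-- Combining Jensen's inequality with the Lipschitz bound in feature space:
if `g` is convex and integrable, `h` is linear and injective, `g ∘ h⁻¹` is `L`-Lipschitz on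
the range of `h` (i.e. `|g y₁ - g y₂| ≤ L ‖h y₁ - h y₂‖`), and
`‖h(x') - ∫ h(x) dμ‖ ≤ σ`, then `g(x') ≤ ∫ g(x) dμ + L·σ`. -/
theorem combined_jensen_lipschitz_bound {n m : ℕ}
    (μ : Measure (EuclideanSpace ℝ (Fin n))) [IsProbabilityMeasure μ]
    (g : EuclideanSpace ℝ (Fin n) → ℝ) (hg : ConvexOn ℝ Set.univ g)
    (hgi : Integrable g μ) (hmean : Integrable (fun x => x) μ)
    (h : EuclideanSpace ℝ (Fin n) →ₗ[ℝ] EuclideanSpace ℝ (Fin m))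
    (hinj : Function.Injective h)
    (L σ : ℝ) (hL : 0 ≤ L) (hσ : 0 ≤ σ)
    (hLip : ∀ y₁ y₂ : EuclideanSpace ℝ (Fin n), |g y₁ - g y₂| ≤ L * ‖h y₁ - h y₂‖)
    (x' : EuclideanSpace ℝ (Fin n))
    (hx' : ‖h x' - ∫ x, h x ∂μ‖ ≤ σ) :
    g x' ≤ (∫ x, g x ∂μ) + L * σ := by
  have hc : Continuous h := h.continuous_of_finiteDimensional
  set mμ : EuclideanSpace ℝ (Fin n) := ∫ x, x ∂μ with hmμ
  have hint : (∫ x, h x ∂μ) = h mμ := by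
    rw [hmμ]
    exact (h.toContinuousLinearMap.integral_comp_comm hmean)
  -- continuity of g
  have hgc : Continuous g := by
    have : LipschitzWith (Real.toNNReal (L * ‖h.toContinuousLinearMap‖)) g := by
      refine LipschitzWith.of_dist_le_mul fun y₁ y₂ => ?_
      rw [Real.dist_eq]
      calc |g y₁ - g y₂| ≤ L * ‖h y₁ - h y₂‖ := hLip y₁ y₂
        _ ≤ L * (‖h.toContinuousLinearMap‖ * ‖y₁ - y₂‖) := by
            apply mul_le_mul_of_nonneg_left _ hL
            rw [← map_sub]
            exact h.toContinuousLinearMap.le_opNorm (y₁ - y₂)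
        _ = L * ‖h.toContinuousLinearMap‖ * dist y₁ y₂ := by
            rw [dist_eq_norm]; ring
        _ ≤ (Real.toNNReal (L * ‖h.toContinuousLinearMap‖)) * dist y₁ y₂ := by
            apply mul_le_mul_of_nonneg_right (Real.le_coe_toNNReal _) dist_nonneg
    exact this.continuous
  have hjensen : g mμ ≤ ∫ x, g x ∂μ := by
    have := hg.map_integral_le (f := fun x => x) hgc.continuousOn isClosed_univ
      (Filter.Eventually.of_forall fun _ => Set.mem_univ _) hmean hgi
    simpa using this
  have hlip : g x' - g mμ ≤ L * σ := by
    calc g x' - g mμ ≤ |g x' - g mμ| := le_abs_self _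
      _ ≤ L * ‖h x' - h mμ‖ := hLip x' mμ
      _ ≤ L * σ := by
          apply mul_le_mul_of_nonneg_left _ hL
          rwa [hint] at hx'
  linarith
end

section
/- Main proposition: assume ℓ̃_ρ^adv(x) ≤ ℓ(x) + ρ‖∇ℓ(x)‖ + ½ρ²λ₁(x) pointwise, ℓ̃_ρ^adv is convex, and for an invertible linear feature map h, ℓ̃_ρ^adv ∘ h⁻¹ is L-Lipschitz with ‖h(x') - E_{x∼D}[h(x)]‖ ≤ σ. Then ℓ̃_ρ^adv(x') ≤ E_{x∼D}[ℓ(x)] + ρ E_{x∼D}‖∇ℓ(x)‖ + ½ρ² E_{x∼D}[λ₁(x)] + Lσ. -/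
open MeasureTheory

/-- Main proposition: under a pointwise quadratic bound on the adversarial loss, convexity of
the adversarial loss, and an `L`-Lipschitz condition for the adversarial loss composed with the
inverse of the invertible linear feature map `h`, any distilled datum `x'` with
`‖h(x') - E[h(x)]‖ ≤ σ` satisfies
`ℓ̃_ρ^adv(x') ≤ E[ℓ] + ρ E‖∇ℓ‖ + ½ρ² E[λ₁] + Lσ`. -/
theorem robust_distillation_main {n : ℕ}
    (μ : Measure (EuclideanSpace ℝ (Fin n))) [IsProbabilityMeasure μ]
    (ℓ lam1 ladv : EuclideanSpace ℝ (Fin n) → ℝ)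
    (G : EuclideanSpace ℝ (Fin n) → EuclideanSpace ℝ (Fin n))
    (ρ L σ : ℝ) (hρ : 0 < ρ) (hL : 0 ≤ L) (hσ : 0 ≤ σ)
    (hpt : ∀ x, ladv x ≤ ℓ x + ρ * ‖G x‖ + (1 / 2) * ρ ^ 2 * lam1 x)
    (hconv : ConvexOn ℝ Set.univ ladv)
    (h : EuclideanSpace ℝ (Fin n) ≃ₗ[ℝ] EuclideanSpace ℝ (Fin n))
    (hLip : LipschitzWith (Real.toNNReal L) (ladv ∘ h.symm))
    (hℓ : Integrable ℓ μ) (hG : Integrable (fun x => ‖G x‖) μ)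
    (hlam : Integrable lam1 μ) (hadv : Integrable ladv μ)
    (hmean : Integrable (fun x => x) μ)
    (x' : EuclideanSpace ℝ (Fin n))
    (hx' : ‖h x' - ∫ x, h x ∂μ‖ ≤ σ) :
    ladv x' ≤ (∫ x, ℓ x ∂μ) + ρ * (∫ x, ‖G x‖ ∂μ)
      + (1 / 2) * ρ ^ 2 * (∫ x, lam1 x ∂μ) + L * σ := by
  set E := ∫ x, x ∂μ with hE
  -- h as a continuous linear map
  let h' : EuclideanSpace ℝ (Fin n) →L[ℝ] EuclideanSpace ℝ (Fin n) :=
    h.toLinearMap.toContinuousLinearMap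
  have hint : (∫ x, h x ∂μ) = h E := by
    have := (h' : EuclideanSpace ℝ (Fin n) →L[ℝ] EuclideanSpace ℝ (Fin n)).integral_comp_comm hmean
    simpa [h'] using this
  -- continuity of ladv
  have hccont : Continuous ladv := by
    have hh : Continuous h := h.toLinearMap.continuous_of_finiteDimensional
    have : Continuous (ladv ∘ h.symm) := hLip.continuous
    have h4 := this.comp hh
    have : ladv = (ladv ∘ ⇑h.symm) ∘ ⇑h := by ext x; simp
    rw [this]; exact h4
  -- Lipschitz step
  have hlipstep : ladv x' ≤ ladv E + L * σ := by
    have h1 : dist ((ladv ∘ h.symm) (h x')) ((ladv ∘ h.symm) (h E)) ≤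
        L * dist (h x') (h E) := by
      have := hLip.dist_le_mul (h x') (h E)
      simpa [Real.coe_toNNReal L hL] using this
    simp only [Function.comp, LinearEquiv.symm_apply_apply] at h1
    have h2 : dist (h x') (h E) ≤ σ := by
      rw [dist_eq_norm, ← hint]; exact hx'
    have h3 : ladv x' - ladv E ≤ L * σ := by
      calc ladv x' - ladv E ≤ |ladv x' - ladv E| := le_abs_self _
        _ = dist (ladv x') (ladv E) := (Real.dist_eq _ _).symm
        _ ≤ L * dist (h x') (h E) := h1
        _ ≤ L * σ := by nlinarith [dist_nonneg (x := h x') (y := h E)]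
    linarith
  -- Jensen
  have hjensen : ladv E ≤ ∫ x, ladv x ∂μ := by
    have := hconv.map_integral_le (hccont.continuousOn) isClosed_univ
      (Filter.Eventually.of_forall fun x => Set.mem_univ x) hmean
      (by exact hadv)
    simpa [Function.comp] using this
  -- integral monotonicity
  have hmono : (∫ x, ladv x ∂μ) ≤ (∫ x, ℓ x ∂μ) + ρ * (∫ x, ‖G x‖ ∂μ)
      + (1 / 2) * ρ ^ 2 * (∫ x, lam1 x ∂μ) := by
    have h1 : Integrable (fun x => ℓ x + ρ * ‖G x‖) μ := hℓ.add (hG.const_mul ρ)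
    have h2 : Integrable (fun x => (1 / 2) * ρ ^ 2 * lam1 x) μ := hlam.const_mul _
    have : (∫ x, ladv x ∂μ) ≤ ∫ x, ℓ x + ρ * ‖G x‖ + (1 / 2) * ρ ^ 2 * lam1 x ∂μ :=
      integral_mono hadv (h1.add h2) hpt
    rw [integral_add h1 h2, integral_add hℓ (hG.const_mul ρ),
        integral_const_mul, integral_const_mul] at this
    linarith
  linarith
end
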